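/- arXiv:0811.3413 — 5 statements merged into one kernel-verified Lean document; each statement's English description precedes it below -/
import Mathlib

section
/- In any of ℝⁿ, Hⁿ, or Sⁿ with n ≥ 3, suppose the single-bubble area function A is strictly concave and the standard double bubble area A(v,w) is strictly concave and symmetric in its arguments. If w < v ≤ 2w and the Hutchings function satisfies F((v+w)/2, (v+w)/2) > 0, then F(v,w) > 0. -/
/-- S-balancing: if `A` (single bubble area) is strictly concave on positive volumes,
the standard double bubble area `B` is strictly concave and symmetric, `w < v ≤ 2w`, and
the Hutchings function `F(m,m) = 2A(m/2) + A(m) + A(2m) − 2B(m,m)` is positive at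
`m = (v+w)/2`, then `F(v,w) = 2A(v/2) + A(w) + A(v+w) − 2B(v,w)` is positive. -/
theorem s_balancing (A : ℝ → ℝ) (B : ℝ → ℝ → ℝ)
    (hA : StrictConcaveOn ℝ (Set.Ioi 0) A)
    (hB : StrictConcaveOn ℝ (Set.Ioi 0 ×ˢ Set.Ioi 0) (fun p : ℝ × ℝ => B p.1 p.2))
    (hBsymm : ∀ x y, B x y = B y x)
    (v w : ℝ) (hw : 0 < w) (hwv : w < v) (hv2w : v ≤ 2 * w)
    (hFmid : 2 * A ((v + w) / 4) + A ((v + w) / 2) + A (v + w) -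
      2 * B ((v + w) / 2) ((v + w) / 2) > 0) :
    2 * A (v / 2) + A w + A (v + w) - 2 * B v w > 0 := by
  have hv : 0 < v := hw.trans hwv
  obtain ⟨c, hc⟩ : ∃ c, c = v + w := ⟨v + w, rfl⟩
  rw [← hc] at hFmid ⊢
  have hcpos : 0 < c := by rw [hc]; positivity
  obtain ⟨t, ht⟩ : ∃ t, t = 3 * (v - w) / c := ⟨_, rfl⟩
  have htpos : 0 < t := by rw [ht]; exact div_pos (by linarith) hcpos
  have ht1 : t ≤ 1 := by rw [ht, div_le_one hcpos]; rw [hc]; linarith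
  have hm4 : c / 4 ∈ Set.Ioi (0:ℝ) := by simp only [Set.mem_Ioi]; positivity
  have hm3 : c / 3 ∈ Set.Ioi (0:ℝ) := by simp only [Set.mem_Ioi]; positivity
  have hm2 : c / 2 ∈ Set.Ioi (0:ℝ) := by simp only [Set.mem_Ioi]; positivity
  -- A(v/2) ≥ (1-t) A(c/4) + t A(c/3)
  have h1 : (1 - t) * A (c / 4) + t * A (c / 3) ≤ A (v / 2) := by
    have := hA.concaveOn.2 hm4 hm3 (by linarith : (0:ℝ) ≤ 1 - t)
      (le_of_lt htpos) (by ring : (1 - t) + t = 1)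
    simp only [smul_eq_mul] at this
    have heq : (1 - t) * (c / 4) + t * (c / 3) = v / 2 := by
      rw [ht]; field_simp; rw [hc]; ring
    rwa [heq] at this
  -- A(w) ≥ (1-t) A(c/2) + t A(c/3)
  have h2 : (1 - t) * A (c / 2) + t * A (c / 3) ≤ A w := by
    have := hA.concaveOn.2 hm2 hm3 (by linarith : (0:ℝ) ≤ 1 - t)
      (le_of_lt htpos) (by ring : (1 - t) + t = 1)
    simp only [smul_eq_mul] at this
    have heq : (1 - t) * (c / 2) + t * (c / 3) = w := by
      rw [ht]; field_simp; rw [hc]; ring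
    rwa [heq] at this
  -- A(c/3) > (2/3) A(c/4) + (1/3) A(c/2)
  have h3 : (2/3 : ℝ) * A (c / 4) + (1/3 : ℝ) * A (c / 2) < A (c / 3) := by
    have hne : c / 4 ≠ c / 2 := ne_of_lt (by linarith)
    have := hA.2 hm4 hm2 hne (by norm_num : (0:ℝ) < 2/3)
      (by norm_num : (0:ℝ) < 1/3) (by norm_num : (2/3 : ℝ) + 1/3 = 1)
    simp only [smul_eq_mul] at this
    have heq : (2/3 : ℝ) * (c / 4) + (1/3 : ℝ) * (c / 2) = c / 3 := by ring
    rwa [heq] at this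
  -- B(c/2, c/2) > B(v, w)
  have h4 : B v w < B (c / 2) (c / 2) := by
    have hvmem : (v, w) ∈ Set.Ioi (0:ℝ) ×ˢ Set.Ioi (0:ℝ) := ⟨hv, hw⟩
    have hwmem : (w, v) ∈ Set.Ioi (0:ℝ) ×ˢ Set.Ioi (0:ℝ) := ⟨hw, hv⟩
    have hne : (v, w) ≠ (w, v) := by
      intro h
      exact absurd (congrArg Prod.fst h) (by simp only; intro h'; linarith)
    have := hB.2 hvmem hwmem hne (by norm_num : (0:ℝ) < 1/2)
      (by norm_num : (0:ℝ) < 1/2) (by norm_num : (1/2 : ℝ) + 1/2 = 1)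
    simp only [Prod.smul_mk, smul_eq_mul, Prod.mk_add_mk] at this
    have heq1 : (1/2 : ℝ) * v + (1/2 : ℝ) * w = c / 2 := by rw [hc]; ring
    have heq2 : (1/2 : ℝ) * w + (1/2 : ℝ) * v = c / 2 := by rw [hc]; ring
    rw [heq1, heq2] at this
    have hsym := hBsymm v w
    linarith
  -- combine
  nlinarith [mul_le_mul_of_nonneg_left (le_of_lt h3) (le_of_lt (by linarith : (0:ℝ) < 3 * t))]
end

section
/- If 0.84 w ≤ v ≤ w, then 2A(v/2) + A(w) + A(v+w) > 2.02676 · A(v,w), where A(x) = (36π)^{1/3} x^{2/3} is the Euclidean sphere area and A(v,w) is the area of the standard double bubble in ℝ³, using that A(v,w) ≤ A((v+w)/2,(v+w)/2) = 2^{−4/3}·3·A(v+w) by concavity. -/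
set_option maxHeartbeats 1000000

/-- Euclidean sphere area enclosing volume `x`. -/
noncomputable def euclideanArea (x : ℝ) : ℝ :=
  (36 * Real.pi) ^ ((1 : ℝ) / 3) * x ^ ((2 : ℝ) / 3)

lemma rpow23_lb (x r : ℝ) (hx : 0 ≤ x) (hr : 0 ≤ r) (h : r ^ 3 ≤ x ^ 2) :
    r ≤ x ^ ((2 : ℝ) / 3) := by
  have hx23 : (0 : ℝ) ≤ x ^ ((2 : ℝ) / 3) := Real.rpow_nonneg hx _
  refine le_of_pow_le_pow_left₀ (n := 3) (by norm_num) hx23 ?_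
  have : (x ^ ((2 : ℝ) / 3)) ^ (3 : ℕ) = x ^ (2 : ℕ) := by
    rw [← Real.rpow_natCast (x ^ ((2 : ℝ) / 3)) 3, ← Real.rpow_mul hx,
      ← Real.rpow_natCast x 2]
    norm_num
  rw [this]
  exact_mod_cast h

lemma rpow13_lb (x r : ℝ) (hx : 0 ≤ x) (hr : 0 ≤ r) (h : r ^ 3 ≤ x) :
    r ≤ x ^ ((1 : ℝ) / 3) := by
  have hx13 : (0 : ℝ) ≤ x ^ ((1 : ℝ) / 3) := Real.rpow_nonneg hx _
  refine le_of_pow_le_pow_left₀ (n := 3) (by norm_num) hx13 ?_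
  have : (x ^ ((1 : ℝ) / 3)) ^ (3 : ℕ) = x := by
    rw [← Real.rpow_natCast (x ^ ((1 : ℝ) / 3)) 3, ← Real.rpow_mul hx]
    norm_num
  rw [this]; exact h

/-- If `0.84 w ≤ v ≤ w` (with `v, w > 0`), and the standard double bubble area `B`
satisfies `B(v,w) ≤ B((v+w)/2, (v+w)/2)` (concavity) with
`B(t,t) = 2^{−4/3}·3·A(2t)`, then
`2A(v/2) + A(w) + A(v+w) > 2.02676 · B(v,w)`. -/
theorem strengthened_euclidean_inequality (B : ℝ → ℝ → ℝ)
    (hBconc : ∀ v w : ℝ, 0 < v → 0 < w → B v w ≤ B ((v + w) / 2) ((v + w) / 2))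
    (hBeq : ∀ t : ℝ, 0 < t → B t t = 2 ^ (-(4 : ℝ) / 3) * 3 * euclideanArea (2 * t))
    (hBpos : ∀ v w : ℝ, 0 < v → 0 < w → 0 < B v w)
    (v w : ℝ) (hv : 0 < v) (hlo : 0.84 * w ≤ v) (hhi : v ≤ w) :
    2 * euclideanArea (v / 2) + euclideanArea w + euclideanArea (v + w) >
      2.02676 * B v w := by
  have hw : 0 < w := lt_of_lt_of_le hv hhi
  have hs : 0 < v + w := by linarith
  -- bound B v w
  have hB : B v w ≤ 2 ^ (-(4 : ℝ) / 3) * 3 * euclideanArea (v + w) := by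
    have h1 := hBconc v w hv hw
    have h2 := hBeq ((v + w) / 2) (by positivity)
    rw [show 2 * ((v + w) / 2) = v + w by ring] at h2
    linarith
  set q : ℝ := (2 : ℝ) / 3 with hq
  set C : ℝ := (36 * Real.pi) ^ ((1 : ℝ) / 3) with hC
  have hCpos : 0 < C := Real.rpow_pos_of_pos (by positivity) _
  set L : ℝ := 23 * (w - v) / (2 * (v + w)) with hL
  have hL0 : 0 ≤ L := by
    apply div_nonneg <;> nlinarith
  have hM0 : 0 ≤ 1 - L := by
    rw [hL, sub_nonneg, div_le_one (by positivity)]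
    nlinarith
  have hvEq : L * (21 / 92 * (v + w)) + (1 - L) * (1 / 4 * (v + w)) = v / 2 := by
    rw [hL]
    field_simp [hL]
    ring
  have hwEq : L * (25 / 46 * (v + w)) + (1 - L) * (1 / 2 * (v + w)) = w := by
    rw [hL]
    field_simp [hL]
    ring
  have hconc : ConcaveOn ℝ (Set.Ici 0) fun x : ℝ => x ^ q :=
    (Real.strictConcaveOn_rpow (by norm_num [hq]) (by norm_num [hq])).concaveOn
  have hsq : 0 < (v + w) ^ q := Real.rpow_pos_of_pos hs _
  -- concavity bounds
  have hvB : L * ((21 / 92 : ℝ) ^ q * (v + w) ^ q)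
      + (1 - L) * ((1 / 4 : ℝ) ^ q * (v + w) ^ q) ≤ (v / 2) ^ q := by
    have := hconc.2 (x := 21 / 92 * (v + w)) (Set.mem_Ici.2 (by positivity))
      (y := 1 / 4 * (v + w)) (Set.mem_Ici.2 (by positivity)) hL0 hM0 (by ring)
    simp only [smul_eq_mul] at this
    rw [hvEq] at this
    rw [← Real.mul_rpow (by norm_num) hs.le, ← Real.mul_rpow (by norm_num) hs.le]
    exact this
  have hwB : L * ((25 / 46 : ℝ) ^ q * (v + w) ^ q)
      + (1 - L) * ((1 / 2 : ℝ) ^ q * (v + w) ^ q) ≤ w ^ q := by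
    have := hconc.2 (x := 25 / 46 * (v + w)) (Set.mem_Ici.2 (by positivity))
      (y := 1 / 2 * (v + w)) (Set.mem_Ici.2 (by positivity)) hL0 hM0 (by ring)
    simp only [smul_eq_mul] at this
    rw [hwEq] at this
    rw [← Real.mul_rpow (by norm_num) hs.le, ← Real.mul_rpow (by norm_num) hs.le]
    exact this
  -- rational lower bounds
  have hp1 : (0.37349745 : ℝ) ≤ (21 / 92 : ℝ) ^ q := by
    rw [hq]; exact rpow23_lb _ _ (by norm_num) (by norm_num) (by norm_num)
  have hp2 : (0.66597018 : ℝ) ≤ (25 / 46 : ℝ) ^ q := by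
    rw [hq]; exact rpow23_lb _ _ (by norm_num) (by norm_num) (by norm_num)
  have hp3 : (0.39685026 : ℝ) ≤ (1 / 4 : ℝ) ^ q := by
    rw [hq]; exact rpow23_lb _ _ (by norm_num) (by norm_num) (by norm_num)
  have hp4 : (0.62996052 : ℝ) ≤ (1 / 2 : ℝ) ^ q := by
    rw [hq]; exact rpow23_lb _ _ (by norm_num) (by norm_num) (by norm_num)
  -- upper bound for 2^(-4/3)
  have hT : (2 : ℝ) ^ (-(4 : ℝ) / 3) ≤ 1 / (2 * 1.25992104) := by
    have h13 : (1.25992104 : ℝ) ≤ (2 : ℝ) ^ ((1 : ℝ) / 3) :=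
      rpow13_lb 2 _ (by norm_num) (by norm_num) (by norm_num)
    have hid : (2 : ℝ) ^ (-(4 : ℝ) / 3) * (2 * (2 : ℝ) ^ ((1 : ℝ) / 3)) = 1 := by
      have h2 : (2 : ℝ) * (2 : ℝ) ^ ((1 : ℝ) / 3) = (2 : ℝ) ^ ((1 : ℝ) + 1 / 3) := by
        rw [Real.rpow_add (by norm_num), Real.rpow_one]
      rw [h2, ← Real.rpow_add (by norm_num)]
      norm_num
    have h13pos : (0 : ℝ) < (2 : ℝ) ^ ((1 : ℝ) / 3) := Real.rpow_pos_of_pos (by norm_num) _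
    have hTpos : (0 : ℝ) < (2 : ℝ) ^ (-(4 : ℝ) / 3) := Real.rpow_pos_of_pos (by norm_num) _
    rw [le_div_iff₀ (by norm_num)]
    nlinarith
  -- key inequality
  have key : 2.02676 * ((2 : ℝ) ^ (-(4 : ℝ) / 3) * 3 * (v + w) ^ q)
      < 2 * (v / 2) ^ q + w ^ q + (v + w) ^ q := by
    set S : ℝ := (v + w) ^ q with hSdef
    set A1 : ℝ := (21 / 92 : ℝ) ^ q with hA1
    set A2 : ℝ := (25 / 46 : ℝ) ^ q with hA2
    set A3 : ℝ := (1 / 4 : ℝ) ^ q with hA3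
    set A4 : ℝ := (1 / 2 : ℝ) ^ q with hA4
    set T : ℝ := (2 : ℝ) ^ (-(4 : ℝ) / 3) with hTdef
    have hTS : T * S ≤ 1 / (2 * 1.25992104) * S :=
      mul_le_mul_of_nonneg_right hT hsq.le
    have t1 : 0 ≤ L * S * (A1 - 0.37349745) :=
      mul_nonneg (mul_nonneg hL0 hsq.le) (sub_nonneg.2 hp1)
    have t2 : 0 ≤ L * S * (A2 - 0.66597018) :=
      mul_nonneg (mul_nonneg hL0 hsq.le) (sub_nonneg.2 hp2)
    have t3 : 0 ≤ (1 - L) * S * (A3 - 0.39685026) :=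
      mul_nonneg (mul_nonneg hM0 hsq.le) (sub_nonneg.2 hp3)
    have t4 : 0 ≤ (1 - L) * S * (A4 - 0.62996052) :=
      mul_nonneg (mul_nonneg hM0 hsq.le) (sub_nonneg.2 hp4)
    have t5 : 0 ≤ L * S := mul_nonneg hL0 hsq.le
    have t6 : 0 ≤ (1 - L) * S := mul_nonneg hM0 hsq.le
    linarith [t1, t2, t3, t4, t5, t6, hvB, hwB, hsq, hTS]
  -- assemble
  have hgoal : 2.02676 * B v w
      ≤ 2.02676 * ((2 : ℝ) ^ (-(4 : ℝ) / 3) * 3 * euclideanArea (v + w)) :=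
    mul_le_mul_of_nonneg_left hB (by norm_num)
  have hEA : euclideanArea (v + w) = C * (v + w) ^ q := rfl
  calc 2.02676 * B v w
      ≤ 2.02676 * ((2 : ℝ) ^ (-(4 : ℝ) / 3) * 3 * (C * (v + w) ^ q)) := by
        rw [← hEA]; exact hgoal
    _ = C * (2.02676 * ((2 : ℝ) ^ (-(4 : ℝ) / 3) * 3 * (v + w) ^ q)) := by ring
    _ < C * (2 * (v / 2) ^ q + w ^ q + (v + w) ^ q) := by
        exact mul_lt_mul_of_pos_left key hCpos
    _ = 2 * euclideanArea (v / 2) + euclideanArea w + euclideanArea (v + w) := by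
        simp only [euclideanArea, ← hC, ← hq]; ring
end

section
/- For w ∈ [1/2, 1/1.84], the function 2^{1/3}(1−w)^{2/3} + w^{2/3} + 1 is at least 2.02676 · 2^{−4/3} · 3. -/
private lemma le_rpow23 (x y : ℝ) (hx : 0 ≤ x) (hy : 0 ≤ y) (h : y ^ 3 ≤ x ^ 2) :
    y ≤ x ^ ((2 : ℝ) / 3) := by
  have h1 : y = (y ^ 3) ^ ((1 : ℝ) / 3) := by
    rw [← Real.rpow_natCast y 3, ← Real.rpow_mul hy]
    norm_num
  have h2 : x ^ ((2 : ℝ) / 3) = (x ^ 2) ^ ((1 : ℝ) / 3) := by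
    rw [← Real.rpow_natCast x 2, ← Real.rpow_mul hx]
    norm_num
  rw [h1, h2]
  exact Real.rpow_le_rpow (pow_nonneg hy 3) h (by norm_num)

private lemma rpow23_le (x y : ℝ) (hx : 0 ≤ x) (hy : 0 ≤ y) (h : x ^ 2 ≤ y ^ 3) :
    x ^ ((2 : ℝ) / 3) ≤ y := by
  have h1 : y = (y ^ 3) ^ ((1 : ℝ) / 3) := by
    rw [← Real.rpow_natCast y 3, ← Real.rpow_mul hy]
    norm_num
  have h2 : x ^ ((2 : ℝ) / 3) = (x ^ 2) ^ ((1 : ℝ) / 3) := by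
    rw [← Real.rpow_natCast x 2, ← Real.rpow_mul hx]
    norm_num
  rw [h1, h2]
  exact Real.rpow_le_rpow (pow_nonneg hx 2) h (by norm_num)

private lemma le_rpow13 (x y : ℝ) (hy : 0 ≤ y) (h : y ^ 3 ≤ x) :
    y ≤ x ^ ((1 : ℝ) / 3) := by
  have h1 : y = (y ^ 3) ^ ((1 : ℝ) / 3) := by
    rw [← Real.rpow_natCast y 3, ← Real.rpow_mul hy]
    norm_num
  rw [h1]
  exact Real.rpow_le_rpow (pow_nonneg hy 3) h (by norm_num)

/-- For `w ∈ [1/2, 1/1.84]`,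
`2^{1/3}(1−w)^{2/3} + w^{2/3} + 1 ≥ 2.02676 · 2^{−4/3} · 3`. -/
theorem scale_invariant_inequality (w : ℝ) (h1 : 1 / 2 ≤ w) (h2 : w ≤ 1 / 1.84) :
    (2 : ℝ) ^ ((1 : ℝ) / 3) * (1 - w) ^ ((2 : ℝ) / 3) + w ^ ((2 : ℝ) / 3) + 1 ≥
      2.02676 * 2 ^ (-(4 : ℝ) / 3) * 3 := by
  have hb : w ≤ 25 / 46 := by
    have : (1 : ℝ) / 1.84 = 25 / 46 := by norm_num
    linarith [this ▸ h2]
  have ha : (0 : ℝ) ≤ w - 1 / 2 := by linarith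
  have hb' : (0 : ℝ) ≤ 25 / 46 - w := by linarith
  have hw0 : (0 : ℝ) ≤ w := by linarith
  have hw1 : (0 : ℝ) ≤ 1 - w := by linarith
  -- chord lower bound for w^{2/3}
  have L1 : (107924733903 / 500000000000 : ℝ) + (20705552857 / 25000000000) * w
      ≤ w ^ ((2 : ℝ) / 3) := by
    apply le_rpow23 w _ hw0 (by nlinarith)
    nlinarith [mul_nonneg (mul_nonneg ha ha) hb', mul_nonneg (mul_nonneg ha hb') hb',
      mul_nonneg (mul_nonneg ha ha) ha, mul_nonneg (mul_nonneg hb' hb') hb']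
  -- chord lower bound for (1-w)^{2/3}
  have L2 : (211253736703 / 200000000000 : ℝ) - (426308158569 / 500000000000) * w
      ≤ (1 - w) ^ ((2 : ℝ) / 3) := by
    apply le_rpow23 (1 - w) _ hw1 (by nlinarith)
    nlinarith [mul_nonneg (mul_nonneg ha ha) hb', mul_nonneg (mul_nonneg ha hb') hb',
      mul_nonneg (mul_nonneg ha ha) ha, mul_nonneg (mul_nonneg hb' hb') hb']
  -- cube root bounds
  have k1 : (1.259921 : ℝ) ≤ 2 ^ ((1 : ℝ) / 3) := by
    apply le_rpow13 2 _ (by norm_num)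
    norm_num
  have u1 : (2 : ℝ) ^ ((2 : ℝ) / 3) ≤ 1.58740106 := by
    apply rpow23_le 2 _ (by norm_num) (by norm_num)
    norm_num
  -- rewrite the RHS
  have hrhs : (2 : ℝ) ^ (-(4 : ℝ) / 3) = (2 : ℝ) ^ ((2 : ℝ) / 3) / 4 := by
    rw [show (-(4 : ℝ) / 3) = (2 : ℝ) / 3 + (-2 : ℝ) by norm_num,
      Real.rpow_add (by norm_num : (0 : ℝ) < 2)]
    rw [show ((-2 : ℝ)) = ((-2 : ℤ) : ℝ) by norm_num, Real.rpow_intCast]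
    norm_num
    ring
  have hL2pos : (0 : ℝ) ≤ (211253736703 / 200000000000 : ℝ) - (426308158569 / 500000000000) * w := by
    nlinarith
  have hmul : (1.259921 : ℝ) * ((211253736703 / 200000000000 : ℝ) - (426308158569 / 500000000000) * w)
      ≤ 2 ^ ((1 : ℝ) / 3) * (1 - w) ^ ((2 : ℝ) / 3) := by
    apply mul_le_mul k1 L2 hL2pos (Real.rpow_nonneg (by norm_num) _)
  rw [ge_iff_le, hrhs]
  nlinarith [hmul, L1, u1]
end

section
/- For each fixed ratio ψ > 0, the Hutchings function in H³ satisfies lim_{w→∞} F(ψw, w) = 2π ln(4(ψ+1)/e²); in particular this limit is nonnegative if and only if ψ ≥ e²/4 − 1. -/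
open Filter Real


/-- For each fixed ratio `ψ > 0`, the Hutchings function
`F(ψw, w) = 2A(ψw/2) + A(w) + A(ψw + w) − 2B(ψw, w)` in `H³` tends to
`2π ln(4(ψ+1)/e²)` as `w → ∞`; in particular this limit is nonnegative if and only if
`ψ ≥ e²/4 − 1`. Here `A` is the sphere area as a function of volume, satisfying
`A(x) = 2x + 2π ln x − 2π(1 − ln(π/2)) + o(1)`, and the standard double bubble area `B`
satisfies `B(v,w) = A(v + v∞) + A(w + v∞) − 2a∞ + c∞ + o(1)` along rays, with
`v∞ = π(3/2 − ln 2)`, `a∞ = 3π`, `c∞ = 2π`. -/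
theorem hutchings_limit_along_rays (A : ℝ → ℝ) (B : ℝ → ℝ → ℝ)
    (hA : Filter.Tendsto
      (fun x => A x - (2 * x + 2 * Real.pi * Real.log x -
        2 * Real.pi * (1 - Real.log (Real.pi / 2)))) Filter.atTop (nhds 0))
    (hB : ∀ ψ : ℝ, 0 < ψ → Filter.Tendsto
      (fun w => B (ψ * w) w -
        (A (ψ * w + Real.pi * (3 / 2 - Real.log 2)) +
         A (w + Real.pi * (3 / 2 - Real.log 2)) - 2 * (3 * Real.pi) + 2 * Real.pi))
      Filter.atTop (nhds 0))
    (ψ : ℝ) (hψ : 0 < ψ) :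
    Filter.Tendsto
      (fun w => 2 * A (ψ * w / 2) + A w + A (ψ * w + w) - 2 * B (ψ * w) w)
      Filter.atTop (nhds (2 * Real.pi * Real.log (4 * (ψ + 1) / Real.exp 2))) ∧
    (0 ≤ 2 * Real.pi * Real.log (4 * (ψ + 1) / Real.exp 2) ↔
      Real.exp 2 / 4 - 1 ≤ ψ) := by
  set v : ℝ := Real.pi * (3 / 2 - Real.log 2) with hv
  have hlog2 : Real.log 2 < 1 := by
    have := Real.log_two_lt_d9; linarith
  have hvpos : 0 < v := by
    have := Real.pi_pos; nlinarith
  set g : ℝ → ℝ := fun x => 2 * x + 2 * Real.pi * Real.log x -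
        2 * Real.pi * (1 - Real.log (Real.pi / 2)) with hg
  -- auxiliary: composed error terms tend to 0
  have haux : ∀ f : ℝ → ℝ, Tendsto f atTop atTop →
      Tendsto (fun w => A (f w) - g (f w)) atTop (nhds 0) := fun f hf => hA.comp hf
  have h1 : Tendsto (fun w => A (ψ * w / 2) - g (ψ * w / 2)) atTop (nhds 0) :=
    haux _ ((tendsto_id.const_mul_atTop hψ).atTop_div_const two_pos)
  have h2 : Tendsto (fun w => A w - g w) atTop (nhds 0) := haux _ tendsto_id
  have h3 : Tendsto (fun w => A (ψ * w + w) - g (ψ * w + w)) atTop (nhds 0) :=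
    haux _ (((tendsto_id.const_mul_atTop (show (0:ℝ) < ψ + 1 by linarith)).congr fun w => by simp; ring))
  have h4 : Tendsto (fun w => A (ψ * w + v) - g (ψ * w + v)) atTop (nhds 0) :=
    haux _ (tendsto_atTop_add_const_right _ v (tendsto_id.const_mul_atTop hψ))
  have h5 : Tendsto (fun w => A (w + v) - g (w + v)) atTop (nhds 0) :=
    haux _ (tendsto_atTop_add_const_right _ v tendsto_id)
  have hB' := hB ψ hψ
  -- ratio limits
  have hvw : Tendsto (fun w : ℝ => v / w) atTop (nhds 0) :=
    tendsto_const_nhds.div_atTop tendsto_id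
  have hr1 : Tendsto (fun w : ℝ => (ψ * w / 2) / (ψ * w + v)) atTop (nhds (1/2)) := by
    have hlim : Tendsto (fun w : ℝ => (ψ / 2) / (ψ + v / w)) atTop (nhds (1/2)) := by
      have h := (tendsto_const_nhds (x := ψ / 2)).div
        ((tendsto_const_nhds (x := ψ)).add hvw) (by simpa using hψ.ne')
      simp only [add_zero] at h
      have he : ψ / 2 / ψ = 1 / 2 := by
        rw [div_div, mul_comm, ← div_div, div_self hψ.ne']
      rw [he] at h
      exact h
    refine hlim.congr' ?_
    filter_upwards [eventually_ge_atTop 1] with w hw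
    have hw0 : (0:ℝ) < w := lt_of_lt_of_le one_pos hw
    have hd : ψ * w + v ≠ 0 := by positivity
    field_simp
  have hr2 : Tendsto (fun w : ℝ => w / (w + v)) atTop (nhds 1) := by
    have hlim : Tendsto (fun w : ℝ => 1 / (1 + v / w)) atTop (nhds 1) := by
      have h := (tendsto_const_nhds (x := (1:ℝ))).div
        ((tendsto_const_nhds (x := (1:ℝ))).add hvw) (by norm_num)
      simp only [add_zero, div_one] at h
      exact h
    refine hlim.congr' ?_
    filter_upwards [eventually_ge_atTop 1] with w hw
    have hw0 : (0:ℝ) < w := lt_of_lt_of_le one_pos hw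
    have hd : w + v ≠ 0 := by positivity
    field_simp
  have hr3 : Tendsto (fun w : ℝ => (ψ * w + w) / (w + v)) atTop (nhds (ψ + 1)) := by
    have hlim : Tendsto (fun w : ℝ => (ψ + 1) / (1 + v / w)) atTop (nhds (ψ + 1)) := by
      have h := (tendsto_const_nhds (x := ψ + 1)).div
        ((tendsto_const_nhds (x := (1:ℝ))).add hvw) (by norm_num)
      simp only [add_zero, div_one] at h
      exact h
    refine hlim.congr' ?_
    filter_upwards [eventually_ge_atTop 1] with w hw
    have hw0 : (0:ℝ) < w := lt_of_lt_of_le one_pos hw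
    have hd : w + v ≠ 0 := by positivity
    field_simp
  -- log limits
  have hlograt : ∀ (r : ℝ → ℝ) (c : ℝ), 0 < c → Tendsto r atTop (nhds c) →
      Tendsto (fun w => Real.log (r w)) atTop (nhds (Real.log c)) := by
    intro r c hc hr
    exact ((Real.continuousAt_log hc.ne').tendsto.comp hr)
  have hL1 := hlograt _ _ (by norm_num) hr1
  have hL2 := hlograt _ _ one_pos hr2
  have hL3 := hlograt _ _ (by linarith) hr3
  -- L limit
  have hL : Tendsto (fun w : ℝ =>
      2 * Real.log (ψ * w / 2) + Real.log w + Real.log (ψ * w + w)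
        - 2 * Real.log (ψ * w + v) - 2 * Real.log (w + v)) atTop
      (nhds (2 * Real.log (1/2) + Real.log 1 + Real.log (ψ + 1))) := by
    refine (((hL1.const_mul 2).add hL2).add hL3).congr' ?_
    filter_upwards [eventually_ge_atTop 1] with w hw
    have hw0 : (0:ℝ) < w := lt_of_lt_of_le one_pos hw
    have e1 : Real.log (ψ * w / 2 / (ψ * w + v)) =
        Real.log (ψ * w / 2) - Real.log (ψ * w + v) :=
      Real.log_div (by positivity) (by positivity)
    have e2 : Real.log (w / (w + v)) = Real.log w - Real.log (w + v) :=
      Real.log_div (by positivity) (by positivity)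
    have e3 : Real.log ((ψ * w + w) / (w + v)) =
        Real.log (ψ * w + w) - Real.log (w + v) :=
      Real.log_div (by positivity) (by positivity)
    simp only [e1, e2, e3]
    ring
  -- G limit
  set T : ℝ := 2 * Real.pi * Real.log (4 * (ψ + 1) / Real.exp 2) with hT
  have hG : Tendsto (fun w : ℝ =>
      2 * g (ψ * w / 2) + g w + g (ψ * w + w) - 2 * g (ψ * w + v) - 2 * g (w + v)
        + 8 * Real.pi) atTop (nhds T) := by
    have := (hL.const_mul (2 * Real.pi)).add
      (tendsto_const_nhds (x := -8 * v + 8 * Real.pi))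
    have hTeq : 2 * Real.pi * (2 * Real.log (1/2) + Real.log 1 + Real.log (ψ + 1))
        + (-8 * v + 8 * Real.pi) = T := by
      rw [hT, hv, Real.log_div (by positivity) (Real.exp_ne_zero _), Real.log_exp,
        Real.log_mul (by norm_num) (by linarith), show (4:ℝ) = 2^2 by norm_num,
        Real.log_pow, Real.log_one, one_div, Real.log_inv]
      push_cast
      ring
    rw [← hTeq]
    refine this.congr fun w => ?_
    simp only [hg]
    ring
  -- combine
  constructor
  · have hcomb := ((((((h1.const_mul 2).add h2).add h3).sub (hB'.const_mul 2)).sub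
      (h4.const_mul 2)).sub (h5.const_mul 2)).add hG
    have : (2:ℝ) * 0 + 0 + 0 - 2 * 0 - 2 * 0 - 2 * 0 + T = T := by ring
    rw [this] at hcomb
    refine hcomb.congr fun w => ?_
    simp only [hg]
    ring
  · have hx : (0:ℝ) < 4 * (ψ + 1) / Real.exp 2 := by positivity
    rw [mul_nonneg_iff_of_pos_left (by positivity : (0:ℝ) < 2 * Real.pi),
      Real.log_nonneg_iff hx, le_div_iff₀ (Real.exp_pos 2), one_mul]
    constructor <;> intro h <;> linarith
end

section
/- For v ≥ λw and w ≥ 150, where λ = e²/4 − 1, the inequality 1/(v/2 + π ln(v/2) − 1.041) + 1/(v + w + π ln(v+w) − 1.041) > 2/(v + π ln v − 3) holds. -/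
lemma algebraic_lemma_aux (a b c : ℝ) (ha : 0 < a) (hb : 0 < b) (hc : 0 < c)
    (h : b * (2*a - c) < a * c) : 1/a + 1/b > 2/c := by
  rw [gt_iff_lt, div_add_div _ _ (ne_of_gt ha) (ne_of_gt hb),
    div_lt_div_iff₀ hc (mul_pos ha hb)]
  nlinarith

set_option maxHeartbeats 1000000 in
/-- For `v ≥ λw` and `w ≥ 150` with `λ = e²/4 − 1`,
`1/(v/2 + π ln(v/2) − 1.041) + 1/(v + w + π ln(v+w) − 1.041) > 2/(v + π ln v − 3)`. -/
theorem algebraic_lemma (v w : ℝ) (hw : 150 ≤ w)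
    (hv : (Real.exp 2 / 4 - 1) * w ≤ v) :
    1 / (v / 2 + Real.pi * Real.log (v / 2) - 1.041) +
      1 / (v + w + Real.pi * Real.log (v + w) - 1.041) >
    2 / (v + Real.pi * Real.log v - 3) := by
  have hpi1 := Real.pi_gt_d6
  have hpi2 := Real.pi_lt_d6
  have he1 := Real.exp_one_gt_d9
  have he2 := Real.exp_one_lt_d9
  have hl2a := Real.log_two_gt_d9
  have hl2b := Real.log_two_lt_d9
  have hexp2 : Real.exp 2 = Real.exp 1 * Real.exp 1 := by
    rw [← Real.exp_add]; norm_num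
  have hlam : (0.847:ℝ) ≤ Real.exp 2 / 4 - 1 := by
    nlinarith [sq_nonneg (Real.exp 1 - 2.7182818283)]
  have hv127 : (127:ℝ) ≤ v := by
    nlinarith [mul_nonneg (sub_nonneg.mpr hlam) (by linarith : (0:ℝ) ≤ w - 150)]
  have hvpos : (0:ℝ) < v := by linarith
  have h0847 : 0.847 * w ≤ v := by
    nlinarith [mul_nonneg (sub_nonneg.mpr hlam) (by linarith : (0:ℝ) ≤ w)]
  have hvwle : v + w ≤ 2.181 * v := by linarith
  have hvw277 : (277:ℝ) ≤ v + w := by linarith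
  -- lower bound on log(v/2)
  have hL2ge : 1 ≤ Real.log (v/2) := by
    rw [Real.le_log_iff_exp_le (by linarith)]
    linarith
  have hsplit : Real.log (v/2) = Real.log v - Real.log 2 :=
    Real.log_div (ne_of_gt hvpos) two_ne_zero
  -- log 31 ≤ 3.544
  have hexp3 : (20.08:ℝ) ≤ Real.exp 3 := by
    have h3 : Real.exp 3 = Real.exp 1 * Real.exp 1 * Real.exp 1 := by
      rw [← Real.exp_add, ← Real.exp_add]; norm_num
    nlinarith
  have hlog31 : Real.log 31 ≤ 3.544 := by
    have h : Real.log (31 / Real.exp 3) ≤ 31 / Real.exp 3 - 1 :=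
      Real.log_le_sub_one_of_pos (by positivity)
    rw [Real.log_div (by norm_num) (Real.exp_ne_zero 3), Real.log_exp] at h
    have h2 : 31 / Real.exp 3 ≤ 31 / 20.08 := by
      rw [div_le_div_iff₀ (Real.exp_pos 3) (by norm_num)]
      nlinarith
    nlinarith
  -- log(v/2) ≤ v/62 + 2.544
  have hL2le : Real.log (v/2) ≤ v/62 + 2.544 := by
    have hrw : v/2 = (v/62) * 31 := by ring
    rw [hrw, Real.log_mul (by positivity) (by norm_num)]
    have := Real.log_le_sub_one_of_pos (show (0:ℝ) < v/62 by positivity)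
    linarith
  -- exp 5 ≥ 148.41
  have hexp5 : (148.41:ℝ) ≤ Real.exp 5 := by
    have h5 : Real.exp 5 = Real.exp 1 * Real.exp 1 * (Real.exp 1 * Real.exp 1) * Real.exp 1 := by
      rw [← Real.exp_add, ← Real.exp_add, ← Real.exp_add]; norm_num
    have h2 : (7.38905:ℝ) ≤ Real.exp 1 * Real.exp 1 := by nlinarith
    have h4 : (54.598:ℝ) ≤ (Real.exp 1 * Real.exp 1) * (Real.exp 1 * Real.exp 1) := by nlinarith
    nlinarith
  have hlog277 : Real.log 277 ≤ 5.867 := by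
    have h : Real.log (277 / Real.exp 5) ≤ 277 / Real.exp 5 - 1 :=
      Real.log_le_sub_one_of_pos (by positivity)
    rw [Real.log_div (by norm_num) (Real.exp_ne_zero 5), Real.log_exp] at h
    have h2 : 277 / Real.exp 5 ≤ 277 / 148.41 := by
      rw [div_le_div_iff₀ (Real.exp_pos 5) (by norm_num)]
      nlinarith
    nlinarith
  have hLwle : Real.log (v+w) ≤ (v+w)/277 + 4.867 := by
    have hrw : v + w = ((v+w)/277) * 277 := by ring
    rw [hrw, Real.log_mul (by positivity) (by norm_num)]
    have := Real.log_le_sub_one_of_pos (show (0:ℝ) < (v+w)/277 by positivity)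
    have h277 : (0:ℝ) < v + w := by linarith
    linarith
  have hLwge : (0:ℝ) ≤ Real.log (v+w) := Real.log_nonneg (by linarith)
  set L2 := Real.log (v/2) with hL2def
  set Lw := Real.log (v+w) with hLwdef
  set A := v/2 + Real.pi * L2 - 1.041 with hAdef
  set B := v + w + Real.pi * Lw - 1.041 with hBdef
  set C := v + Real.pi * Real.log v - 3 with hCdef
  set Lv := Real.log v with hLvdef
  clear_value L2 Lw A B C Lv
  have hLv : Lv = L2 + Real.log 2 := by rw [hsplit]; ring
  have hApos : v/2 < A := by
    rw [hAdef]
    have h1 : Real.pi * 1 ≤ Real.pi * L2 :=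
      mul_le_mul_of_nonneg_left hL2ge Real.pi_pos.le
    linarith only [h1, hpi1]
  have hCpos : v < C := by
    rw [hCdef, hLv]
    have h1 : Real.pi * 1 ≤ Real.pi * (L2 + Real.log 2) :=
      mul_le_mul_of_nonneg_left (by linarith only [hL2ge, hl2a]) Real.pi_pos.le
    linarith only [h1, hpi1]
  have hBub : B < 1.5 * (v+w) := by
    rw [hBdef]
    have h1 : Real.pi * Lw ≤ 3.141593 * ((v+w)/277 + 4.867) :=
      mul_le_mul hpi2.le hLwle hLwge (by norm_num)
    linarith only [h1, hvw277]
  have hBpos : (0:ℝ) < B := by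
    rw [hBdef]
    linarith only [mul_nonneg Real.pi_pos.le hLwge, hvw277]
  have hA0 : (0:ℝ) < A := by linarith only [hApos, hvpos]
  have hC0 : (0:ℝ) < C := by linarith only [hCpos, hvpos]
  have hT : 2*A - C = Real.pi * (L2 - Real.log 2) + 0.918 := by
    rw [hAdef, hCdef, hLv]; ring
  have hX0 : (0:ℝ) ≤ L2 - Real.log 2 := by linarith only [hL2ge, hl2b]
  have hTpos : (0:ℝ) < 2*A - C := by
    rw [hT]
    linarith only [mul_nonneg Real.pi_pos.le hX0]
  have hTub : 2*A - C ≤ 3.141593 * (v/62 + 1.851) + 0.918 := by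
    rw [hT]
    have h1 : Real.pi * (L2 - Real.log 2) ≤ 3.141593 * (v/62 + 1.851) :=
      mul_le_mul hpi2.le (by linarith only [hL2le, hl2a]) hX0 (by norm_num)
    linarith only [h1]
  have hkey : B * (2*A - C) < A * C := by
    have hBT : B * (2*A - C) ≤ (1.5*(v+w)) * (2*A - C) :=
      mul_le_mul_of_nonneg_right hBub.le hTpos.le
    have hvwT : (1.5*(v+w)) * (2*A - C) ≤ (1.5*(2.181*v)) * (2*A - C) :=
      mul_le_mul_of_nonneg_right (by linarith only [hvwle]) hTpos.le
    have hvT : (1.5*(2.181*v)) * (2*A - C) ≤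
        (1.5*(2.181*v)) * (3.141593 * (v/62 + 1.851) + 0.918) :=
      mul_le_mul_of_nonneg_left hTub (by positivity)
    have hAC : (v/2) * v ≤ A * C :=
      mul_le_mul hApos.le hCpos.le hvpos.le hA0.le
    have hvv : (0:ℝ) ≤ (v - 127) * v := mul_nonneg (by linarith only [hv127]) hvpos.le
    nlinarith only [hBT, hvwT, hvT, hAC, hvv, hv127, hvpos]
  exact algebraic_lemma_aux A B C hA0 hBpos hC0 hkey
end
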